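/- arXiv:math/9905055 — 2 statements merged into one kernel-verified Lean document; each statement's English description precedes it below -/
import Mathlib

section
/- Fix w ∈ W and assume k is algebraically closed. Let H_w = {(h_1,…,h_n) ∈ H : h_j = 1 for all j ∉ w}. Assume G_w ⊇ H_w and that G_w/H_w is a Zariski-closed subgroup of H/H_w. Then for M, M' ∈ max_w R, one has (M : 𝒢) = (M' : 𝒢) if and only if M' = g(M) for some g ∈ G_w; that is, the fibers of the map max_w R → 𝒢-max_w R, M ↦ (M : 𝒢), are exactly the G_w-orbits in max_w R. -/
open MvPolynomial

/-- The action of `h ∈ (kˣ)ⁿ` on `k[y₁,…,yₙ]` by `yᵢ ↦ hᵢ yᵢ`. -/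
noncomputable def tact {k : Type*} [CommSemiring k] {n : ℕ} (h : Fin n → kˣ) :
    MvPolynomial (Fin n) k →ₐ[k] MvPolynomial (Fin n) k :=
  aeval fun i => (h i : k) • X i

/-- `(I : G) = ⋂_{g ∈ G} g(I)` for a subgroup `G` of the torus `(kˣ)ⁿ`. -/
noncomputable def resT {k : Type*} [CommSemiring k] {n : ℕ} (G : Subgroup (Fin n → kˣ))
    (I : Ideal (MvPolynomial (Fin n) k)) : Ideal (MvPolynomial (Fin n) k) :=
  ⨅ g ∈ G, Ideal.comap (tact g) I

/-- `spec_w R`: primes `P` with `P ∩ {y₁,…,yₙ} = {yᵢ : i ∈ w}`. -/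
def specW (k : Type*) [CommSemiring k] {n : ℕ} (w : Set (Fin n)) :
    Set (Ideal (MvPolynomial (Fin n) k)) :=
  {P | P.IsPrime ∧ ∀ i, X i ∈ P ↔ i ∈ w}

/-- `max_w R = max R ∩ spec_w R`. -/
def maxW (k : Type*) [CommSemiring k] {n : ℕ} (w : Set (Fin n)) :
    Set (Ideal (MvPolynomial (Fin n) k)) :=
  {M | M.IsMaximal ∧ ∀ i, X i ∈ M ↔ i ∈ w}

/-- `𝒢-spec_w R = {(P : G_w) : P ∈ spec_w R}`. -/
def GspecW {k : Type*} [CommSemiring k] {n : ℕ}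
    (G : Set (Fin n) → Subgroup (Fin n → kˣ)) (w : Set (Fin n)) :
    Set (Ideal (MvPolynomial (Fin n) k)) :=
  {Q | ∃ P ∈ specW k w, Q = resT (G w) P}

/-- `𝒢-spec R`, the set of `𝒢`-prime ideals. -/
def GspecAll {k : Type*} [CommSemiring k] {n : ℕ}
    (G : Set (Fin n) → Subgroup (Fin n → kˣ)) :
    Set (Ideal (MvPolynomial (Fin n) k)) :=
  ⋃ w, GspecW G w

/-- `𝒢`-semiprime ideals: intersections of collections of `𝒢`-prime ideals. -/
def GSemiprime {k : Type*} [CommSemiring k] {n : ℕ}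
    (G : Set (Fin n) → Subgroup (Fin n → kˣ))
    (J : Ideal (MvPolynomial (Fin n) k)) : Prop :=
  ∃ T ⊆ GspecAll G, J = sInf T

/-- `𝒢-max_w R = {(M : G_w) : M ∈ max_w R}`. -/
def GmaxW {k : Type*} [CommSemiring k] {n : ℕ}
    (G : Set (Fin n) → Subgroup (Fin n → kˣ)) (w : Set (Fin n)) :
    Set (Ideal (MvPolynomial (Fin n) k)) :=
  {Q | ∃ M ∈ maxW k w, Q = resT (G w) M}

/-- `𝒢-max R`. -/
def GmaxAll {k : Type*} [CommSemiring k] {n : ℕ}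
    (G : Set (Fin n) → Subgroup (Fin n → kˣ)) :
    Set (Ideal (MvPolynomial (Fin n) k)) :=
  ⋃ w, GmaxW G w

/-- `P ↦ (P : 𝒢)`, i.e. `(P : G_w)` where `w = {i : yᵢ ∈ P}`. -/
noncomputable def Gquot {k : Type*} [CommSemiring k] {n : ℕ}
    (G : Set (Fin n) → Subgroup (Fin n → kˣ))
    (P : Ideal (MvPolynomial (Fin n) k)) : Ideal (MvPolynomial (Fin n) k) :=
  resT (G {i | X i ∈ P}) P

lemma eval_aeval' {k : Type*} [CommSemiring k] {n : ℕ}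
    (s : Fin n → MvPolynomial (Fin n) k) (x : Fin n → k) (f : MvPolynomial (Fin n) k) :
    eval x (aeval s f) = eval (fun i => eval x (s i)) f := by
  have : (eval x).comp ((aeval s : MvPolynomial (Fin n) k →ₐ[k] _) :
      MvPolynomial (Fin n) k →+* MvPolynomial (Fin n) k)
      = eval (fun i => eval x (s i)) := by
    apply MvPolynomial.ringHom_ext <;> simp
  exact congrFun (congrArg (fun φ => φ.toFun) this) f

lemma eval_tact {k : Type*} [CommSemiring k] {n : ℕ} (g : Fin n → kˣ)
    (x : Fin n → k) (f : MvPolynomial (Fin n) k) :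
    eval x (tact g f) = eval (fun i => (g i : k) * x i) f := by
  rw [tact, eval_aeval']
  simp

lemma tact_tact {k : Type*} [CommSemiring k] {n : ℕ} (g g' : Fin n → kˣ)
    (f : MvPolynomial (Fin n) k) :
    tact g (tact g' f) = tact (g * g') f := by
  have : (tact g).comp (tact g') = tact (g * g' : Fin n → kˣ) := by
    apply MvPolynomial.algHom_ext
    intro i
    simp [tact, smul_smul, mul_comm]
  exact AlgHom.congr_fun this f

lemma mem_resT {k : Type*} [CommSemiring k] {n : ℕ} {G : Subgroup (Fin n → kˣ)}
    {I : Ideal (MvPolynomial (Fin n) k)} {x : MvPolynomial (Fin n) k} :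
    x ∈ resT G I ↔ ∀ g ∈ G, tact g x ∈ I := by
  simp [resT, Ideal.mem_iInf, Ideal.mem_comap]

lemma comap_tact_vanishingIdeal {k : Type*} [Field k] {n : ℕ} (g : Fin n → kˣ)
    (a : Fin n → k) :
    Ideal.comap (tact g) (vanishingIdeal k {a}) = vanishingIdeal k {fun i => (g i : k) * a i} := by
  ext f
  simp [Ideal.mem_comap, mem_vanishingIdeal_singleton_iff, eval_tact]

/-- Proposition 2.7: fix `w`, `k` algebraically closed; assume
`H_w ⊆ G_w` and `G_w/H_w` is Zariski closed in `H/H_w` (expressed via the natural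
identification of `H/H_w` with the subtorus `{h : hᵢ = 1 for i ∈ w}`, whose closed
subsets are cut out by polynomials).  Then the fibers of `M ↦ (M : 𝒢)` on `max_w R`
are exactly the `G_w`-orbits. -/
theorem stmt_12 {k : Type*} [Field k] [IsAlgClosed k] {n : ℕ}
    (G : Set (Fin n) → Subgroup (Fin n → kˣ))
    (hcompat : ∀ v w : Set (Fin n), v ⊆ w → ∀ P ∈ specW k w,
      resT (G v) P ≤ resT (G w) P)
    (w : Set (Fin n))
    -- `H_w ⊆ G_w`, where `H_w = {h ∈ H : h_j = 1 for all j ∉ w}`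
    (hHw : ∀ h : Fin n → kˣ, (∀ j, j ∉ w → h j = 1) → h ∈ G w)
    -- `G_w/H_w` is a Zariski-closed subgroup of `H/H_w`
    (hclosed : ∃ E : Set (MvPolynomial (Fin n) k), ∀ h : Fin n → kˣ,
      (∀ i ∈ w, h i = 1) →
      (h ∈ G w ↔ ∀ f ∈ E, eval (fun i => (h i : k)) f = 0)) :
    ∀ M ∈ maxW k w, ∀ M' ∈ maxW k w,
      (resT (G w) M = resT (G w) M' ↔ ∃ g ∈ G w, M' = Ideal.comap (tact g) M) := by
  classical
  intro M hM M' hM'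
  obtain ⟨a, rfl⟩ := (isMaximal_iff_eq_vanishingIdeal_singleton (I := M)).1 hM.1
  obtain ⟨a', rfl⟩ := (isMaximal_iff_eq_vanishingIdeal_singleton (I := M')).1 hM'.1
  have ha : ∀ i, a i = 0 ↔ i ∈ w := by
    intro i
    have := hM.2 i
    rwa [mem_vanishingIdeal_singleton_iff, aeval_eq_eval, eval_X] at this
  have ha' : ∀ i, a' i = 0 ↔ i ∈ w := by
    intro i
    have := hM'.2 i
    rwa [mem_vanishingIdeal_singleton_iff, aeval_eq_eval, eval_X] at this
  constructor
  · -- forward direction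
    intro hres
    have hane : ∀ i, i ∉ w → a i ≠ 0 := fun i hi h0 => hi ((ha i).1 h0)
    have ha'ne : ∀ i, i ∉ w → a' i ≠ 0 := fun i hi h0 => hi ((ha' i).1 h0)
    have key : ∀ g : Fin n → kˣ, ∀ hdef : (∀ i, (g i : k) = if i ∈ w then 1 else a' i * (a i)⁻¹),
        True := fun _ _ => trivial
    refine (fun (g : Fin n → kˣ)
        (hg1 : ∀ i ∈ w, g i = 1)
        (hgval : ∀ i, i ∉ w → (g i : k) = a' i * (a i)⁻¹) => ?_)
      (fun i => if h : i ∈ w then 1 else Units.mk0 (a' i) (ha'ne i h) * (Units.mk0 (a i) (hane i h))⁻¹)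
      (fun i hi => dif_pos hi)
      (fun i hi => by simp [dif_neg hi])
    have hga : ∀ i, (g i : k) * a i = a' i := by
      intro i
      by_cases hi : i ∈ w
      · rw [hg1 i hi, (ha i).2 hi, (ha' i).2 hi]
        simp
      · rw [hgval i hi, mul_assoc, inv_mul_cancel₀ (hane i hi), mul_one]
    obtain ⟨E, hE⟩ := hclosed
    have hgG : g ∈ G w := by
      rw [hE g (fun i hi => hg1 i hi)]
      intro f hf
      -- the polynomial F obtained from f by substituting yᵢ ↦ aᵢ⁻¹ yᵢ (i ∉ w), yᵢ ↦ 1 (i ∈ w)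
      have hFres : (aeval (fun i => if i ∈ w then 1 else ((a i)⁻¹ : k) • X i) f : MvPolynomial (Fin n) k)
          ∈ resT (G w) (vanishingIdeal k {a}) := by
        rw [mem_resT]
        intro g' hg'
        rw [mem_vanishingIdeal_singleton_iff, aeval_eq_eval, eval_tact, eval_aeval']
        have huG : (fun i => if i ∈ w then 1 else g' i) ∈ G w := by
          have hd : (fun i => if i ∈ w then (g' i)⁻¹ else 1) ∈ G w := by
            apply hHw
            intro j hj
            simp [if_neg hj]
          have heq : (fun i => if i ∈ w then 1 else g' i)
              = g' * fun i => if i ∈ w then (g' i)⁻¹ else 1 := by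
            funext i
            by_cases hi : i ∈ w <;> simp [Pi.mul_apply, hi]
          rw [heq]
          exact mul_mem hg' hd
        have := (hE _ (fun i hi => by simp [hi])).1 huG f hf
        have hpt : (fun i => eval (fun j => ((g' j : k)) * a j)
              (if i ∈ w then 1 else ((a i)⁻¹ : k) • X i))
            = fun i => (((if i ∈ w then 1 else g' i : kˣ)) : k) := by
          funext i
          by_cases hi : i ∈ w
          · simp [hi]
          · simp only [if_neg hi]
            rw [smul_eq_C_mul]
            simp only [eval_mul, eval_C, eval_X]
            field_simp [hane i hi]
        rw [hpt]
        exact this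
      rw [hres] at hFres
      have hF' : eval a' (aeval (fun i => if i ∈ w then 1 else ((a i)⁻¹ : k) • X i) f
          : MvPolynomial (Fin n) k) = 0 := by
        have := (mem_resT.1 hFres) 1 (one_mem _)
        rw [mem_vanishingIdeal_singleton_iff, aeval_eq_eval, eval_tact] at this
        simpa using this
      rw [eval_aeval'] at hF'
      have hpt2 : (fun i => ((g i : k)))
          = fun i => eval a' (if i ∈ w then 1 else ((a i)⁻¹ : k) • X i) := by
        funext i
        by_cases hi : i ∈ w
        · simp [hi, hg1 i hi]
        · simp only [if_neg hi]
          rw [smul_eq_C_mul]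
          simp only [eval_mul, eval_C, eval_X]
          rw [hgval i hi]
          ring
      rw [hpt2]
      exact hF'
    refine ⟨g, hgG, ?_⟩
    rw [comap_tact_vanishingIdeal]
    have : (fun i => (g i : k) * a i) = a' := funext hga
    rw [this]
  · -- converse direction
    rintro ⟨g, hgG, heq⟩
    rw [heq]
    ext x
    rw [mem_resT, mem_resT]
    constructor
    · intro hx g' hg'
      rw [Ideal.mem_comap, tact_tact]
      exact hx (g * g') (mul_mem hgG hg')
    · intro hx h hh
      have := hx (g⁻¹ * h) (mul_mem (inv_mem hgG) hh)
      rw [Ideal.mem_comap, tact_tact] at this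
      rwa [mul_inv_cancel_left] at this
end

section
/- Assume k is algebraically closed. The assignment P ↦ (P : S^⊥) defines H-equivariant topological quotient maps spec kΓ → S^⊥-spec kΓ and max kΓ → S^⊥-max kΓ. -/
/-- The character `α ↦ ∏ᵢ hᵢ^{αᵢ}` of `Γ = ℤⁿ` attached to `h ∈ (kˣ)ⁿ`. -/
def powChar {k : Type*} [Field k] {n : ℕ} (h : Fin n → kˣ) :
    Multiplicative (Fin n → ℤ) →* kˣ where
  toFun α := ∏ i, h i ^ (Multiplicative.toAdd α i)
  map_one' := by simp
  map_mul' a b := by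
    simp [toAdd_mul, Pi.add_apply, zpow_add, Finset.prod_mul_distrib]

/-- Auxiliary monoid homomorphism `α ↦ χ(α) yᵅ` into the Laurent polynomial ring
`kΓ = k[y₁^{±1},…,yₙ^{±1}]` (realized as the group algebra of `Γ = ℤⁿ`). -/
noncomputable def scaleMonHom {k : Type*} [Field k] {n : ℕ}
    (χ : Multiplicative (Fin n → ℤ) →* kˣ) :
    Multiplicative (Fin n → ℤ) →* AddMonoidAlgebra k (Fin n → ℤ) where
  toFun α := ((χ α : k)) • AddMonoidAlgebra.of k (Fin n → ℤ) α
  map_one' := by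
    show (↑(χ 1) : k) • (AddMonoidAlgebra.of k (Fin n → ℤ)) 1 = 1
    rw [map_one, map_one, Units.val_one, one_smul]
  map_mul' a b := by
    show (↑(χ (a * b)) : k) • (AddMonoidAlgebra.of k (Fin n → ℤ)) (a * b)
      = ((↑(χ a) : k) • (AddMonoidAlgebra.of k (Fin n → ℤ)) a) *
        ((↑(χ b) : k) • (AddMonoidAlgebra.of k (Fin n → ℤ)) b)
    rw [map_mul, map_mul, Units.val_mul, smul_mul_smul_comm]

/-- The `k`-algebra automorphism of the Laurent polynomial ring scaling the monomial
`yᵅ` by `χ(α)`, for a character `χ : Γ → kˣ`. -/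
noncomputable def lactM {k : Type*} [Field k] {n : ℕ}
    (χ : Multiplicative (Fin n → ℤ) →* kˣ) :
    AddMonoidAlgebra k (Fin n → ℤ) →ₐ[k] AddMonoidAlgebra k (Fin n → ℤ) :=
  AddMonoidAlgebra.lift k _ (Fin n → ℤ) (scaleMonHom χ)

section Aux1
variable {k : Type*} [Field k] {n : ℕ}

local notation "G" => Multiplicative (Fin n → ℤ)
local notation "R" => AddMonoidAlgebra k (Fin n → ℤ)

lemma lactM_of (χ : G →* kˣ) (α : G) :
    lactM χ (AddMonoidAlgebra.of k (Fin n → ℤ) α)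
      = ((χ α : k)) • AddMonoidAlgebra.of k (Fin n → ℤ) α :=
  AddMonoidAlgebra.lift_of (scaleMonHom χ) α

lemma lactM_single (χ : G →* kˣ) (α : Fin n → ℤ) :
    lactM χ (AddMonoidAlgebra.single α (1 : k))
      = ((χ (Multiplicative.ofAdd α) : k)) • AddMonoidAlgebra.single α (1 : k) :=
  lactM_of χ (Multiplicative.ofAdd α)

lemma lactM_comp (χ χ' : G →* kˣ) :
    (lactM (k := k) χ).comp (lactM χ') = lactM (χ * χ') := by
  apply AddMonoidAlgebra.algHom_ext ?_ (Subsingleton.elim _ _)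
  intro α
  simp only [AlgHom.comp_apply, lactM_single, map_smul, smul_smul, MonoidHom.mul_apply,
    Units.val_mul, mul_comm]

lemma lactM_one : lactM (1 : G →* kˣ) = AlgHom.id k R := by
  apply AddMonoidAlgebra.algHom_ext ?_ (Subsingleton.elim _ _)
  intro α
  simp only [lactM_single, MonoidHom.one_apply, Units.val_one, one_smul, AlgHom.coe_id, id_eq]

lemma lactM_lactM (χ χ' : G →* kˣ) (x : R) :
    lactM χ (lactM χ' x) = lactM (χ * χ') x := by
  rw [← lactM_comp]; rfl

lemma lactM_one_apply (x : R) : lactM (1 : G →* kˣ) x = x := by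
  rw [lactM_one]; rfl

lemma lactM_surjective (χ : G →* kˣ) : Function.Surjective (lactM (k := k) χ) := by
  intro y
  refine ⟨lactM χ⁻¹ y, ?_⟩
  have h : χ * χ⁻¹ = 1 := mul_inv_cancel χ
  rw [lactM_lactM, h, lactM_one_apply]

end Aux1

/-- The action of `h ∈ H = (kˣ)ⁿ` on the Laurent polynomial ring, `yᵢ ↦ hᵢ yᵢ`. -/
noncomputable def lact {k : Type*} [Field k] {n : ℕ} (h : Fin n → kˣ) :
    AddMonoidAlgebra k (Fin n → ℤ) →ₐ[k] AddMonoidAlgebra k (Fin n → ℤ) :=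
  lactM (powChar h)

variable {k : Type*} [Field k] {n : ℕ}

/-- `S^⊥ = {h ∈ H = Hom(Γ,kˣ) : h ≡ 1 on S}`, where `S = rad σ`. -/
def SperpSet (σ : (Fin n → ℤ) → (Fin n → ℤ) → kˣ) :
    Set (Multiplicative (Fin n → ℤ) →* kˣ) :=
  {χ | ∀ α, (∀ β, σ α β = 1) → χ (Multiplicative.ofAdd α) = 1}

/-- An `S^⊥`-ideal of `kΓ`: an ideal stable under the action of `S^⊥`. -/
def IsSperpIdeal (σ : (Fin n → ℤ) → (Fin n → ℤ) → kˣ)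
    (I : Ideal (AddMonoidAlgebra k (Fin n → ℤ))) : Prop :=
  ∀ χ ∈ SperpSet σ, Ideal.comap (lactM χ) I = I

/-- `(I : S^⊥) = ⋂_{h ∈ S^⊥} h(I)`. -/
noncomputable def resSperp (σ : (Fin n → ℤ) → (Fin n → ℤ) → kˣ)
    (I : Ideal (AddMonoidAlgebra k (Fin n → ℤ))) : Ideal (AddMonoidAlgebra k (Fin n → ℤ)) :=
  ⨅ χ ∈ SperpSet σ, Ideal.comap (lactM χ) I

/-- An `S^⊥`-prime ideal of `kΓ`. -/
def IsSperpPrime (σ : (Fin n → ℤ) → (Fin n → ℤ) → kˣ)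
    (Q : Ideal (AddMonoidAlgebra k (Fin n → ℤ))) : Prop :=
  IsSperpIdeal σ Q ∧ Q ≠ ⊤ ∧
    ∀ I J : Ideal (AddMonoidAlgebra k (Fin n → ℤ)),
      IsSperpIdeal σ I → IsSperpIdeal σ J → I * J ≤ Q → I ≤ Q ∨ J ≤ Q

/-- A maximal proper `S^⊥`-ideal of `kΓ`. -/
def IsSperpMax (σ : (Fin n → ℤ) → (Fin n → ℤ) → kˣ)
    (Q : Ideal (AddMonoidAlgebra k (Fin n → ℤ))) : Prop :=
  IsSperpIdeal σ Q ∧ Q ≠ ⊤ ∧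
    ∀ J : Ideal (AddMonoidAlgebra k (Fin n → ℤ)),
      IsSperpIdeal σ J → J ≠ ⊤ → Q ≤ J → J = Q

section Aux2
variable {σ : (Fin n → ℤ) → (Fin n → ℤ) → kˣ}

local notation "G" => Multiplicative (Fin n → ℤ)
local notation "R" => AddMonoidAlgebra k (Fin n → ℤ)

lemma one_mem_sperp : (1 : G →* kˣ) ∈ SperpSet σ := fun _ _ => rfl

lemma mul_mem_sperp {χ χ' : G →* kˣ} (h : χ ∈ SperpSet σ) (h' : χ' ∈ SperpSet σ) :
    χ * χ' ∈ SperpSet σ := fun α hα => by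
  rw [MonoidHom.mul_apply, h α hα, h' α hα, one_mul]

lemma inv_mem_sperp {χ : G →* kˣ} (h : χ ∈ SperpSet σ) : χ⁻¹ ∈ SperpSet σ := fun α hα => by
  rw [MonoidHom.inv_apply, h α hα, inv_one]

lemma mem_resSperp {I : Ideal R} {x : R} :
    x ∈ resSperp σ I ↔ ∀ χ ∈ SperpSet σ, lactM χ x ∈ I := by
  simp [resSperp, Ideal.mem_iInf, Ideal.mem_comap]

lemma resSperp_le_comap {I : Ideal R} {χ : G →* kˣ} (h : χ ∈ SperpSet σ) :
    resSperp σ I ≤ Ideal.comap (lactM χ) I := fun x hx => mem_resSperp.1 hx χ h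

lemma le_resSperp {I J : Ideal R} (h : ∀ χ ∈ SperpSet σ, J ≤ Ideal.comap (lactM χ) I) :
    J ≤ resSperp σ I := fun x hx => mem_resSperp.2 (fun χ hχ => h χ hχ hx)

lemma resSperp_le_self {I : Ideal R} : resSperp σ I ≤ I := fun x hx => by
  have := mem_resSperp.1 hx 1 one_mem_sperp
  rwa [lactM_one_apply] at this

lemma resSperp_mono {I J : Ideal R} (h : I ≤ J) : resSperp σ I ≤ resSperp σ J :=
  le_resSperp fun χ hχ => (resSperp_le_comap hχ).trans (Ideal.comap_mono h)

lemma le_resSperp_of_sperpIdeal {Q I : Ideal R} (hQ : IsSperpIdeal σ Q) (h : Q ≤ I) :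
    Q ≤ resSperp σ I :=
  le_resSperp fun χ hχ => by rw [← hQ χ hχ]; exact Ideal.comap_mono h

lemma resSperp_eq_self {Q : Ideal R} (hQ : IsSperpIdeal σ Q) : resSperp σ Q = Q :=
  le_antisymm resSperp_le_self (le_resSperp_of_sperpIdeal hQ le_rfl)

lemma isSperpIdeal_resSperp (I : Ideal R) : IsSperpIdeal σ (resSperp σ I) := by
  intro χ₀ hχ₀
  ext x
  rw [Ideal.mem_comap, mem_resSperp, mem_resSperp]
  constructor
  · intro h χ hχ
    have h1 := h (χ * χ₀⁻¹) (mul_mem_sperp hχ (inv_mem_sperp hχ₀))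
    rw [lactM_lactM] at h1
    rwa [inv_mul_cancel_right χ χ₀] at h1
  · intro h χ hχ
    rw [lactM_lactM]
    exact h (χ * χ₀) (mul_mem_sperp hχ hχ₀)

lemma resSperp_comap (χ : G →* kˣ) (I : Ideal R) :
    resSperp σ (Ideal.comap (lactM χ) I) = Ideal.comap (lactM χ) (resSperp σ I) := by
  ext x
  rw [Ideal.mem_comap, mem_resSperp, mem_resSperp]
  constructor
  · intro h χ' hχ'
    have h2 := h χ' hχ'
    rw [Ideal.mem_comap, lactM_lactM] at h2
    rw [lactM_lactM, mul_comm χ' χ]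
    exact h2
  · intro h χ' hχ'
    have h2 := h χ' hχ'
    rw [lactM_lactM, mul_comm χ' χ] at h2
    rw [Ideal.mem_comap, lactM_lactM]
    exact h2

lemma comap_mul_le (χ : G →* kˣ) (A B : Ideal R) :
    Ideal.comap (lactM χ) A * Ideal.comap (lactM χ) B ≤ Ideal.comap (lactM χ) (A * B) := by
  rw [Ideal.mul_le]
  intro r hr s hs
  rw [Ideal.mem_comap, map_mul]
  exact Ideal.mul_mem_mul hr hs

lemma resSperp_mul_le (A B : Ideal R) :
    resSperp σ A * resSperp σ B ≤ resSperp σ (A * B) :=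
  le_resSperp fun χ hχ =>
    (Ideal.mul_mono (resSperp_le_comap hχ) (resSperp_le_comap hχ)).trans (comap_mul_le χ A B)

lemma isSperpIdeal_top : IsSperpIdeal σ (⊤ : Ideal R) := fun χ _ => Ideal.comap_top

lemma resSperp_top : resSperp σ (⊤ : Ideal R) = ⊤ := resSperp_eq_self isSperpIdeal_top

/-- (A): the restriction of a prime is `S⊥`-prime. -/
lemma isSperpPrime_resSperp {P : Ideal R} (hP : P.IsPrime) : IsSperpPrime σ (resSperp σ P) := by
  refine ⟨isSperpIdeal_resSperp P, fun h => hP.ne_top (top_le_iff.1 (h ▸ resSperp_le_self)), ?_⟩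
  intro I J hI hJ hIJ
  rcases hP.mul_le.1 (hIJ.trans resSperp_le_self) with h | h
  · exact Or.inl (le_resSperp_of_sperpIdeal hI h)
  · exact Or.inr (le_resSperp_of_sperpIdeal hJ h)

end Aux2

section Aux3
variable {σ : (Fin n → ℤ) → (Fin n → ℤ) → kˣ}

local notation "G" => Multiplicative (Fin n → ℤ)
local notation "R" => AddMonoidAlgebra k (Fin n → ℤ)

instance : AddMonoid.FG (Fin n → ℤ) :=
  AddGroup.fg_iff_addMonoid_fg.mp (Module.Finite.iff_addGroup_fg.mp inferInstance)

instance : IsNoetherianRing (AddMonoidAlgebra k (Fin n → ℤ)) :=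
  Algebra.FiniteType.isNoetherianRing k _

/-- (B): every `S⊥`-prime is the restriction of a prime lying over it. -/
lemma exists_prime_resSperp {Q : Ideal R} (hQ : IsSperpPrime σ Q) :
    ∃ P : Ideal R, P.IsPrime ∧ Q ≤ P ∧ resSperp σ P = Q := by
  obtain ⟨P, hPmem, hPmax⟩ := set_has_maximal_iff_noetherian.mpr
    (inferInstance : IsNoetherianRing (AddMonoidAlgebra k (Fin n → ℤ)))
    {I : Ideal R | Q ≤ I ∧ resSperp σ I ≤ Q}
    ⟨Q, le_rfl, (resSperp_eq_self hQ.1).le⟩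
  have hres : resSperp σ P = Q := le_antisymm hPmem.2 (le_resSperp_of_sperpIdeal hQ.1 hPmem.1)
  have hPne : P ≠ ⊤ := by
    intro h
    exact hQ.2.1 (top_le_iff.1 (by rw [← hres, h]; exact resSperp_top.ge))
  refine ⟨P, ⟨hPne, ?_⟩, hPmem.1, hres⟩
  intro x y hxy
  by_contra hcon
  push_neg at hcon
  obtain ⟨hx, hy⟩ := hcon
  have hABP : (P ⊔ Ideal.span {x}) * (P ⊔ Ideal.span {y}) ≤ P := by
    rw [Ideal.mul_le]
    intro r hr s hs
    obtain ⟨p, hp, u, hu, rfl⟩ := Submodule.mem_sup.1 hr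
    obtain ⟨c, rfl⟩ := Ideal.mem_span_singleton'.1 hu
    obtain ⟨q, hq, v, hv, rfl⟩ := Submodule.mem_sup.1 hs
    obtain ⟨d, rfl⟩ := Ideal.mem_span_singleton'.1 hv
    have h1 : p * (q + d * y) ∈ P := Ideal.mul_mem_right _ _ hp
    have h2 : c * x * q ∈ P := Ideal.mul_mem_left _ _ hq
    have h3 : c * d * (x * y) ∈ P := Ideal.mul_mem_left _ _ hxy
    have he : (p + c * x) * (q + d * y)
        = p * (q + d * y) + c * x * q + c * d * (x * y) := by ring
    rw [he]
    exact Ideal.add_mem _ (Ideal.add_mem _ h1 h2) h3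
  have hle : resSperp σ (P ⊔ Ideal.span {x}) * resSperp σ (P ⊔ Ideal.span {y}) ≤ Q := by
    refine le_trans ?_ hres.le
    exact (resSperp_mul_le _ _).trans (resSperp_mono hABP)
  have hlt : ∀ z : R, z ∉ P → P < P ⊔ Ideal.span {z} := by
    intro z hz
    refine lt_of_le_of_ne le_sup_left ?_
    intro hPA
    exact hz (by rw [hPA]; exact Ideal.mem_sup_right (Ideal.mem_span_singleton_self z))
  rcases hQ.2.2 _ _ (isSperpIdeal_resSperp (P ⊔ Ideal.span {x}))
      (isSperpIdeal_resSperp (P ⊔ Ideal.span {y})) hle with h | h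
  · exact hPmax _ ⟨hPmem.1.trans le_sup_left, h⟩ (hlt x hx)
  · exact hPmax _ ⟨hPmem.1.trans le_sup_left, h⟩ (hlt y hy)

/-- Evaluation of a Laurent polynomial at the point `γ ∈ Hom(Γ, kˣ)`. -/
noncomputable def evalChar (γ : G →* kˣ) : AddMonoidAlgebra k (Fin n → ℤ) →ₐ[k] k :=
  AddMonoidAlgebra.lift k k (Fin n → ℤ) ((Units.coeHom k).comp γ)

lemma evalChar_of (γ : G →* kˣ) (α : G) :
    evalChar γ (AddMonoidAlgebra.of k (Fin n → ℤ) α) = (γ α : k) :=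
  AddMonoidAlgebra.lift_of _ α

lemma evalChar_single (γ : G →* kˣ) (α : Fin n → ℤ) :
    evalChar γ (AddMonoidAlgebra.single α (1 : k)) = (γ (Multiplicative.ofAdd α) : k) :=
  evalChar_of γ (Multiplicative.ofAdd α)

lemma evalChar_lactM (γ χ : G →* kˣ) (x : R) :
    evalChar γ (lactM χ x) = evalChar (χ * γ) x := by
  have h : (evalChar γ).comp (lactM χ) = evalChar (k := k) (χ * γ) := by
    apply AddMonoidAlgebra.algHom_ext ?_ (Subsingleton.elim _ _)
    intro α
    simp only [AlgHom.comp_apply, lactM_single, map_smul, evalChar_single,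
      MonoidHom.mul_apply, Units.val_mul, smul_eq_mul]
  exact AlgHom.congr_fun h x

lemma comap_ker_evalChar (χ γ : G →* kˣ) :
    Ideal.comap (lactM χ) (RingHom.ker (evalChar (k := k) (n := n) γ))
      = RingHom.ker (evalChar (χ * γ)) := by
  ext x
  rw [Ideal.mem_comap, RingHom.mem_ker, RingHom.mem_ker, evalChar_lactM]

lemma evalChar_surjective (γ : G →* kˣ) :
    Function.Surjective (evalChar (k := k) (n := n) γ) := fun c =>
  ⟨algebraMap k (AddMonoidAlgebra k (Fin n → ℤ)) c, by
    rw [AlgHom.commutes]; exact Algebra.algebraMap_self_apply c⟩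

lemma ker_evalChar_isMaximal (γ : G →* kˣ) :
    (RingHom.ker (evalChar (k := k) (n := n) γ)).IsMaximal :=
  RingHom.ker_isMaximal_of_surjective _ (evalChar_surjective γ)

end Aux3

section Aux4
variable [IsAlgClosed k] {σ : (Fin n → ℤ) → (Fin n → ℤ) → kˣ}

local notation "G" => Multiplicative (Fin n → ℤ)
local notation "R" => AddMonoidAlgebra k (Fin n → ℤ)

/-- The Nullstellensatz for `kΓ`: every maximal ideal is the kernel of evaluation at a
point of the torus `Hom(Γ, kˣ)`. -/
lemma exists_char_of_isMaximal {M : Ideal R} (hM : M.IsMaximal) :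
    ∃ γ : G →* kˣ, M = RingHom.ker (evalChar γ) := by
  letI : Field (R ⧸ M) := Ideal.Quotient.field M
  haveI : Algebra.FiniteType k (R ⧸ M) :=
    Algebra.FiniteType.of_surjective (Ideal.Quotient.mkₐ k M)
      Ideal.Quotient.mk_surjective
  haveI : Module.Finite k (R ⧸ M) := finite_of_finite_type_of_isJacobsonRing k _
  haveI : Algebra.IsIntegral k (R ⧸ M) := Algebra.IsIntegral.of_finite k _
  have hsurj : Function.Surjective (algebraMap k (R ⧸ M)) :=
    IsAlgClosed.algebraMap_bijective_of_isIntegral.2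
  have hinj : Function.Injective (algebraMap k (R ⧸ M)) := (algebraMap k (R ⧸ M)).injective
  let e : k ≃+* (R ⧸ M) := RingEquiv.ofBijective (algebraMap k (R ⧸ M)) ⟨hinj, hsurj⟩
  let φ : R →ₐ[k] k :=
    { toRingHom := e.symm.toRingHom.comp (Ideal.Quotient.mk M)
      commutes' := fun c => by
        show e.symm (Ideal.Quotient.mk M (algebraMap k R c)) = algebraMap k k c
        have h1 : Ideal.Quotient.mk M (algebraMap k R c) = algebraMap k (R ⧸ M) c :=
          (Ideal.Quotient.mkₐ k M).commutes c
        have h2 : algebraMap k (R ⧸ M) c = e c := rfl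
        rw [h1, h2, e.symm_apply_apply]
        exact (Algebra.algebraMap_self_apply c).symm }
  have hkerφ : RingHom.ker φ = M := by
    ext x
    have hshow : φ x = e.symm (Ideal.Quotient.mk M x) := rfl
    rw [RingHom.mem_ker, hshow, map_eq_zero_iff _ e.symm.injective,
      Ideal.Quotient.eq_zero_iff_mem]
  refine ⟨(Units.map ((φ : R →+* k) : R →* k)).comp
      (AddMonoidAlgebra.of k (Fin n → ℤ)).toHomUnits, ?_⟩
  have hev : evalChar ((Units.map ((φ : R →+* k) : R →* k)).comp
      (AddMonoidAlgebra.of k (Fin n → ℤ)).toHomUnits) = φ := by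
    apply AddMonoidAlgebra.algHom_ext ?_ (Subsingleton.elim _ _)
    intro α
    rw [evalChar_single]
    show (((Units.map ((φ : R →+* k) : R →* k)).comp
      (AddMonoidAlgebra.of k (Fin n → ℤ)).toHomUnits) (Multiplicative.ofAdd α) : k) = _
    rw [MonoidHom.comp_apply, Units.coe_map, MonoidHom.coe_toHomUnits]
    rfl
  rw [hev, hkerφ]

/-- (C): the restriction of a maximal ideal is `S⊥`-maximal. -/
lemma isSperpMax_resSperp {M : Ideal R} (hM : M.IsMaximal) :
    IsSperpMax σ (resSperp σ M) := by
  refine ⟨isSperpIdeal_resSperp M, ?_, ?_⟩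
  · intro h
    exact hM.ne_top (top_le_iff.1 (by rw [← h]; exact resSperp_le_self))
  intro J hJ hJtop hQJ
  obtain ⟨M', hM'max, hJM'⟩ := Ideal.exists_le_maximal J hJtop
  obtain ⟨γ, rfl⟩ := exists_char_of_isMaximal hM
  obtain ⟨δ, hδ⟩ := exists_char_of_isMaximal hM'max
  have key : ∀ α : Fin n → ℤ, (∀ β, σ α β = 1) →
      δ (Multiplicative.ofAdd α) = γ (Multiplicative.ofAdd α) := by
    intro α hα
    have hfres : AddMonoidAlgebra.of k (Fin n → ℤ) (Multiplicative.ofAdd α)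
        - algebraMap k R ((γ (Multiplicative.ofAdd α) : k))
          ∈ resSperp σ (RingHom.ker (evalChar γ)) := by
      rw [mem_resSperp]
      intro χ hχ
      rw [RingHom.mem_ker, evalChar_lactM, map_sub, evalChar_of, AlgHom.commutes,
        MonoidHom.mul_apply, Units.val_mul, hχ α hα, Units.val_one, one_mul,
        Algebra.algebraMap_self_apply, sub_self]
    have hfM' : AddMonoidAlgebra.of k (Fin n → ℤ) (Multiplicative.ofAdd α)
        - algebraMap k R ((γ (Multiplicative.ofAdd α) : k)) ∈ RingHom.ker (evalChar δ) := by
      rw [← hδ]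
      exact hJM' (hQJ hfres)
    rw [RingHom.mem_ker, map_sub, evalChar_of, AlgHom.commutes,
      Algebra.algebraMap_self_apply, sub_eq_zero] at hfM'
    exact Units.ext hfM'
  have hχ₀ : δ * γ⁻¹ ∈ SperpSet σ := by
    intro α hα
    rw [MonoidHom.mul_apply, MonoidHom.inv_apply, key α hα]
    exact mul_inv_cancel _
  have hM'eq : M' = Ideal.comap (lactM (δ * γ⁻¹)) (RingHom.ker (evalChar γ)) := by
    rw [comap_ker_evalChar, inv_mul_cancel_right δ γ, hδ]
  have hJM : J ≤ RingHom.ker (evalChar γ) := by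
    have h1 : J ≤ Ideal.comap (lactM (δ * γ⁻¹)) (RingHom.ker (evalChar γ)) := by
      rw [← hM'eq]; exact hJM'
    have h2 := Ideal.comap_mono (f := lactM ((δ * γ⁻¹)⁻¹)) h1
    rw [hJ _ (inv_mem_sperp hχ₀)] at h2
    refine h2.trans ?_
    intro x hx
    rw [Ideal.mem_comap, Ideal.mem_comap, lactM_lactM] at hx
    have he : (δ * γ⁻¹) * (δ * γ⁻¹)⁻¹ = 1 := by
      refine MonoidHom.ext fun x => ?_
      simp only [MonoidHom.mul_apply, MonoidHom.inv_apply, MonoidHom.one_apply]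
      group
    rwa [he, lactM_one_apply] at hx
  exact le_antisymm (le_resSperp_of_sperpIdeal hJ hJM) hQJ

/-- (D): every `S⊥`-maximal ideal is the restriction of a maximal ideal lying over it. -/
lemma exists_maximal_resSperp {Q : Ideal R} (hQ : IsSperpMax σ Q) :
    ∃ M : Ideal R, M.IsMaximal ∧ Q ≤ M ∧ resSperp σ M = Q := by
  obtain ⟨M, hMmax, hQM⟩ := Ideal.exists_le_maximal Q hQ.2.1
  have h1 : Q ≤ resSperp σ M := le_resSperp_of_sperpIdeal hQ.1 hQM
  have h2 : resSperp σ M ≠ ⊤ := fun h =>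
    hMmax.ne_top (top_le_iff.1 (by rw [← h]; exact resSperp_le_self))
  exact ⟨M, hMmax, hQM, hQ.2.2 _ (isSperpIdeal_resSperp M) h2 h1⟩

end Aux4


section Aux5
variable {σ : (Fin n → ℤ) → (Fin n → ℤ) → kˣ}

local notation "G" => Multiplicative (Fin n → ℤ)
local notation "R" => AddMonoidAlgebra k (Fin n → ℤ)

lemma le_resSperp_iff_sup_map_le {I P : Ideal R} :
    I ≤ resSperp σ P ↔ (⨆ χ ∈ SperpSet σ, Ideal.map (lactM χ) I) ≤ P := by
  constructor
  · intro h
    refine iSup₂_le fun χ hχ => Ideal.map_le_iff_le_comap.2 (h.trans (resSperp_le_comap hχ))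
  · intro h
    refine le_resSperp fun χ hχ => Ideal.map_le_iff_le_comap.1 ?_
    exact le_trans (le_iSup₂ (f := fun χ _ => Ideal.map (lactM χ) I) χ hχ) h

end Aux5

/-- Proposition 3.10: `P ↦ (P : S^⊥)` gives `H`-equivariant topological
quotient maps `spec kΓ → S^⊥-spec kΓ` and `max kΓ → S^⊥-max kΓ`. -/
theorem stmt_16 {k : Type*} [Field k] [IsAlgClosed k] {n : ℕ}
    (σ : (Fin n → ℤ) → (Fin n → ℤ) → kˣ)
    (halt : ∀ α, σ α α = 1)
    (hmul₁ : ∀ α β γ, σ (α + β) γ = σ α γ * σ β γ)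
    (hmul₂ : ∀ α β γ, σ α (β + γ) = σ α β * σ α γ) :
    -- the first map is well defined into `S^⊥-spec kΓ` and onto it
    (∀ P : Ideal (AddMonoidAlgebra k (Fin n → ℤ)), P.IsPrime → IsSperpPrime σ (resSperp σ P)) ∧
    (∀ Q : Ideal (AddMonoidAlgebra k (Fin n → ℤ)), IsSperpPrime σ Q →
        ∃ P : Ideal (AddMonoidAlgebra k (Fin n → ℤ)), P.IsPrime ∧ resSperp σ P = Q) ∧
    -- `H`-equivariance
    (∀ χ : Multiplicative (Fin n → ℤ) →* kˣ, ∀ I : Ideal (AddMonoidAlgebra k (Fin n → ℤ)),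
        resSperp σ (Ideal.comap (lactM χ) I) = Ideal.comap (lactM χ) (resSperp σ I)) ∧
    -- quotient topology condition for `spec kΓ → S^⊥-spec kΓ`
    (∀ V ⊆ {Q : Ideal (AddMonoidAlgebra k (Fin n → ℤ)) | IsSperpPrime σ Q},
        (∃ I : Ideal (AddMonoidAlgebra k (Fin n → ℤ)),
            V = {Q | IsSperpPrime σ Q ∧ I ≤ Q}) ↔
        (∃ I : Ideal (AddMonoidAlgebra k (Fin n → ℤ)),
            {P | P.IsPrime ∧ resSperp σ P ∈ V} = {P | P.IsPrime ∧ I ≤ P})) ∧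
    -- the second map is well defined into `S^⊥-max kΓ` and onto it
    (∀ M : Ideal (AddMonoidAlgebra k (Fin n → ℤ)), M.IsMaximal → IsSperpMax σ (resSperp σ M)) ∧
    (∀ Q : Ideal (AddMonoidAlgebra k (Fin n → ℤ)), IsSperpMax σ Q →
        ∃ M : Ideal (AddMonoidAlgebra k (Fin n → ℤ)), M.IsMaximal ∧ resSperp σ M = Q) ∧
    -- quotient topology condition for `max kΓ → S^⊥-max kΓ` (relative topologies)
    (∀ V ⊆ {Q : Ideal (AddMonoidAlgebra k (Fin n → ℤ)) | IsSperpMax σ Q},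
        (∃ I : Ideal (AddMonoidAlgebra k (Fin n → ℤ)),
            V = {Q | IsSperpMax σ Q ∧ I ≤ Q}) ↔
        (∃ I : Ideal (AddMonoidAlgebra k (Fin n → ℤ)),
            {M | M.IsMaximal ∧ resSperp σ M ∈ V} = {M | M.IsMaximal ∧ I ≤ M})) := by
  constructor
  · exact fun P hP => isSperpPrime_resSperp hP
  constructor
  · exact fun Q hQ => (exists_prime_resSperp hQ).imp fun P h => ⟨h.1, h.2.2⟩
  constructor
  · exact fun χ I => resSperp_comap χ I
  constructor
  · -- quotient topology for spec
    intro V hV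
    constructor
    · rintro ⟨I, rfl⟩
      refine ⟨⨆ χ ∈ SperpSet σ, Ideal.map (lactM χ) I, ?_⟩
      ext P
      simp only [Set.mem_setOf_eq]
      constructor
      · rintro ⟨hP, hmem⟩
        exact ⟨hP, le_resSperp_iff_sup_map_le.1 hmem.2⟩
      · rintro ⟨hP, hle⟩
        exact ⟨hP, isSperpPrime_resSperp hP, le_resSperp_iff_sup_map_le.2 hle⟩
    · rintro ⟨I, hI⟩
      refine ⟨I, ?_⟩
      ext Q
      simp only [Set.mem_setOf_eq]
      constructor
      · intro hQV
        have hQ : IsSperpPrime σ Q := hV hQV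
        refine ⟨hQ, ?_⟩
        obtain ⟨P, hP, hQP, hres⟩ := exists_prime_resSperp hQ
        rw [← hres]
        refine le_resSperp fun χ hχ => ?_
        have hresc : resSperp σ (Ideal.comap (lactM χ) P) = Q := by
          rw [resSperp_comap, hres, hQ.1 χ hχ]
        have hmem : Ideal.comap (lactM χ) P
            ∈ {P : Ideal (AddMonoidAlgebra k (Fin n → ℤ)) | P.IsPrime ∧ resSperp σ P ∈ V} :=
          ⟨hP.comap _, by rw [hresc]; exact hQV⟩
        rw [hI] at hmem
        exact hmem.2
      · rintro ⟨hQ, hIQ⟩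
        obtain ⟨P, hP, hQP, hres⟩ := exists_prime_resSperp hQ
        have hmem : P ∈ {P : Ideal (AddMonoidAlgebra k (Fin n → ℤ)) | P.IsPrime ∧ I ≤ P} :=
          ⟨hP, hIQ.trans hQP⟩
        rw [← hI] at hmem
        have h2 := hmem.2
        rwa [hres] at h2
  constructor
  · exact fun M hM => isSperpMax_resSperp hM
  constructor
  · exact fun Q hQ => (exists_maximal_resSperp hQ).imp fun M h => ⟨h.1, h.2.2⟩
  · -- quotient topology for max
    intro V hV
    constructor
    · rintro ⟨I, rfl⟩
      refine ⟨⨆ χ ∈ SperpSet σ, Ideal.map (lactM χ) I, ?_⟩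
      ext M
      simp only [Set.mem_setOf_eq]
      constructor
      · rintro ⟨hM, hmem⟩
        exact ⟨hM, le_resSperp_iff_sup_map_le.1 hmem.2⟩
      · rintro ⟨hM, hle⟩
        exact ⟨hM, isSperpMax_resSperp hM, le_resSperp_iff_sup_map_le.2 hle⟩
    · rintro ⟨I, hI⟩
      refine ⟨I, ?_⟩
      ext Q
      simp only [Set.mem_setOf_eq]
      constructor
      · intro hQV
        have hQ : IsSperpMax σ Q := hV hQV
        refine ⟨hQ, ?_⟩
        obtain ⟨M, hM, hQM, hres⟩ := exists_maximal_resSperp hQ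
        rw [← hres]
        refine le_resSperp fun χ hχ => ?_
        have hmax : (Ideal.comap (lactM χ) M).IsMaximal := by
          haveI := hM
          exact Ideal.comap_isMaximal_of_surjective _ (lactM_surjective χ)
        have hresc : resSperp σ (Ideal.comap (lactM χ) M) = Q := by
          rw [resSperp_comap, hres, hQ.1 χ hχ]
        have hmem : Ideal.comap (lactM χ) M
            ∈ {M : Ideal (AddMonoidAlgebra k (Fin n → ℤ)) | M.IsMaximal ∧ resSperp σ M ∈ V} :=
          ⟨hmax, by rw [hresc]; exact hQV⟩
        rw [hI] at hmem
        exact hmem.2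
      · rintro ⟨hQ, hIQ⟩
        obtain ⟨M, hM, hQM, hres⟩ := exists_maximal_resSperp hQ
        have hmem : M ∈ {M : Ideal (AddMonoidAlgebra k (Fin n → ℤ)) | M.IsMaximal ∧ I ≤ M} :=
          ⟨hM, hIQ.trans hQM⟩
        rw [← hI] at hmem
        have h2 := hmem.2
        rwa [hres] at h2
end
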